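/- Let a : [0,T] → ℝ be continuous, and for each n let F_i^{(n)} := ∫_{(i−1)Δt_n}^{iΔt_n} a(u)du with Δt_n → 0. Then for each t ∈ [0,T], ∏_{i=1}^{⌊t/Δt_n⌋} (1 + F_i^{(n)})^{-1} → exp(−∫_0^t a(s)ds) as n → ∞. -/

import Mathlib

open MeasureTheory intervalIntegral

/-- For `a` continuous on `[0,T]`, mesh sizes `Δt n > 0` tending to `0`,
and `F_i^{(n)} = ∫_{iΔtₙ}^{(i+1)Δtₙ} a(u) du` (indexing the subintervals of `[0,t]`),
for each `t ∈ [0,T]`,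
`∏_{i=0}^{⌊t/Δtₙ⌋-1} (1 + F_i^{(n)})⁻¹ → exp(-∫_0^t a(s) ds)` as `n → ∞`. -/
theorem product_tendsto_exp_neg_integral (T : ℝ) (hT : 0 < T) (a : ℝ → ℝ)
    (ha : ContinuousOn a (Set.Icc 0 T)) (Δt : ℕ → ℝ) (hΔt : ∀ n, 0 < Δt n)
    (hΔt0 : Filter.Tendsto Δt Filter.atTop (nhds 0))
    (t : ℝ) (ht : t ∈ Set.Icc 0 T) :
    Filter.Tendsto
      (fun n => ∏ i ∈ Finset.range ⌊t / Δt n⌋₊,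
        (1 + ∫ u in (i * Δt n)..((i + 1) * Δt n), a u)⁻¹)
      Filter.atTop (nhds (Real.exp (-∫ u in (0:ℝ)..t, a u))) := by
  obtain ⟨ht0, htT⟩ := ht
  obtain ⟨M, hM⟩ := IsCompact.exists_bound_of_continuousOn isCompact_Icc ha
  have hM0 : 0 ≤ M := le_trans (norm_nonneg _) (hM 0 ⟨le_rfl, hT.le⟩)
  set S := ∫ u in (0:ℝ)..t, a u with hSdef
  -- basic facts about the floor point
  have hNle : ∀ n, (⌊t / Δt n⌋₊ : ℝ) * Δt n ≤ t := fun n =>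
    (le_div_iff₀ (hΔt n)).mp (Nat.floor_le (div_nonneg ht0 (hΔt n).le))
  have htlt : ∀ n, t < ((⌊t / Δt n⌋₊ : ℝ) + 1) * Δt n := fun n =>
    (div_lt_iff₀ (hΔt n)).mp (Nat.lt_floor_add_one _)
  -- interval integrability on subintervals of [0,T]
  have hint : ∀ x y : ℝ, 0 ≤ x → y ≤ T → x ≤ y → IntervalIntegrable a volume x y := by
    intro x y hx hy hxy
    apply ContinuousOn.intervalIntegrable
    apply ha.mono
    rw [Set.uIcc_of_le hxy]
    exact Set.Icc_subset_Icc hx hy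
  -- bound for integrals on subintervals of [0,T]
  have hbnd : ∀ x y : ℝ, 0 ≤ x → y ≤ T → x ≤ y → |∫ u in x..y, a u| ≤ M * (y - x) := by
    intro x y hx hy hxy
    have h1 : ∀ u ∈ Set.uIoc x y, ‖a u‖ ≤ M := by
      intro u hu
      rw [Set.uIoc_of_le hxy] at hu
      exact hM u ⟨hx.trans hu.1.le, hu.2.trans hy⟩
    have := intervalIntegral.norm_integral_le_of_norm_le_const h1
    rwa [Real.norm_eq_abs, abs_of_nonneg (sub_nonneg.2 hxy)] at this
  -- per-index bounds
  have hiT : ∀ n, ∀ i ∈ Finset.range ⌊t / Δt n⌋₊, ((i : ℝ) + 1) * Δt n ≤ T := by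
    intro n i hi
    rw [Finset.mem_range] at hi
    have h1 : ((i : ℝ) + 1) ≤ (⌊t / Δt n⌋₊ : ℝ) := by exact_mod_cast hi
    calc ((i : ℝ) + 1) * Δt n ≤ (⌊t / Δt n⌋₊ : ℝ) * Δt n :=
          mul_le_mul_of_nonneg_right h1 (hΔt n).le
      _ ≤ t := hNle n
      _ ≤ T := htT
  have hFb : ∀ n, ∀ i ∈ Finset.range ⌊t / Δt n⌋₊,
      |∫ u in ((i : ℝ) * Δt n)..(((i : ℝ) + 1) * Δt n), a u| ≤ M * Δt n := by
    intro n i hi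
    have h1 : (0:ℝ) ≤ (i : ℝ) * Δt n := mul_nonneg (Nat.cast_nonneg i) (hΔt n).le
    have h2 : (i : ℝ) * Δt n ≤ ((i : ℝ) + 1) * Δt n := by nlinarith [(hΔt n).le]
    have := hbnd _ _ h1 (hiT n i hi) h2
    have heq : ((i : ℝ) + 1) * Δt n - (i : ℝ) * Δt n = Δt n := by ring
    rwa [heq] at this
  -- eventual smallness
  have hsmall : ∀ᶠ n in Filter.atTop, M * Δt n < 1/2 := by
    have h1 : Filter.Tendsto (fun n => M * Δt n) Filter.atTop (nhds 0) := by
      simpa using hΔt0.const_mul M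
    exact h1.eventually_lt_const (by norm_num)
  -- sum of subinterval integrals telescopes
  have hsum : ∀ n, (∑ i ∈ Finset.range ⌊t / Δt n⌋₊,
      ∫ u in ((i : ℝ) * Δt n)..(((i : ℝ) + 1) * Δt n), a u)
      = ∫ u in (0:ℝ)..((⌊t / Δt n⌋₊ : ℝ) * Δt n), a u := by
    intro n
    have h1 : ∀ k < ⌊t / Δt n⌋₊,
        IntervalIntegrable a volume ((k : ℝ) * Δt n) (((k : ℝ) + 1) * Δt n) := by
      intro k hk
      refine hint _ _ (mul_nonneg (Nat.cast_nonneg k) (hΔt n).le)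
        (hiT n k (Finset.mem_range.2 hk)) ?_
      nlinarith [(hΔt n).le]
    have h2 := intervalIntegral.sum_integral_adjacent_intervals
      (a := fun k : ℕ => (k : ℝ) * Δt n) (μ := volume) (f := a)
      (n := ⌊t / Δt n⌋₊) (fun k hk => by push_cast; exact h1 k hk)
    simpa using h2
  -- the key: convergence of the sum of logs
  have hkey : Filter.Tendsto (fun n => ∑ i ∈ Finset.range ⌊t / Δt n⌋₊,
      Real.log (1 + ∫ u in ((i : ℝ) * Δt n)..(((i : ℝ) + 1) * Δt n), a u))
      Filter.atTop (nhds S) := by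
    rw [tendsto_iff_dist_tendsto_zero]
    have hb : Filter.Tendsto (fun n => (2 * M^2 * t + M) * Δt n) Filter.atTop (nhds 0) := by
      simpa using hΔt0.const_mul (2 * M^2 * t + M)
    refine squeeze_zero' (Filter.Eventually.of_forall fun n => dist_nonneg) ?_ hb
    filter_upwards [hsmall] with n hn
    rw [Real.dist_eq]
    set N := ⌊t / Δt n⌋₊ with hNdef
    set F : ℕ → ℝ := fun i => ∫ u in ((i : ℝ) * Δt n)..(((i : ℝ) + 1) * Δt n), a u with hF
    show |(∑ i ∈ Finset.range N, Real.log (1 + F i)) - S| ≤ (2 * M^2 * t + M) * Δt n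
    -- per-term log estimate
    have hlog : ∀ i ∈ Finset.range N, |Real.log (1 + F i) - F i| ≤ 2 * (M * Δt n)^2 := by
      intro i hi
      have hFi : |F i| ≤ M * Δt n := hFb n i hi
      have hFi2 : |F i| < 1/2 := lt_of_le_of_lt hFi hn
      have h1 : |(-F i)| < 1 := by rw [abs_neg]; linarith
      have h2 := Real.abs_log_sub_add_sum_range_le h1 1
      simp only [Finset.sum_range_one, pow_one] at h2
      have h3 : (1 : ℝ) - -F i = 1 + F i := by ring
      rw [h3, abs_neg] at h2
      have h4 : |Real.log (1 + F i) - F i|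
          = |(-F i) ^ (0 + 1) / ((0:ℕ) + 1) + Real.log (1 + F i)| := by
        have : (-F i) ^ (0 + 1) / (((0:ℕ):ℝ) + 1) + Real.log (1 + F i)
            = -(F i - Real.log (1 + F i)) := by push_cast; ring
        rw [this, abs_neg, abs_sub_comm]
      rw [h4]
      refine h2.trans ?_
      have h5 : (1:ℝ) - |F i| ≥ 1/2 := by linarith
      have h7 : |F i| ^ (1 + 1) ≤ (M * Δt n)^2 := by
        rw [show (1 + 1 : ℕ) = 2 from rfl]
        exact pow_le_pow_left₀ (abs_nonneg _) hFi 2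
      have h8 : (0:ℝ) < 1 - |F i| := by linarith
      rw [div_le_iff₀ h8]
      nlinarith [sq_nonneg (M * Δt n), abs_nonneg (F i)]
    -- sum of logs minus sum of integrals
    have hstep1 : |(∑ i ∈ Finset.range N, Real.log (1 + F i)) - ∑ i ∈ Finset.range N, F i|
        ≤ 2 * M^2 * t * Δt n := by
      rw [← Finset.sum_sub_distrib]
      calc |∑ i ∈ Finset.range N, (Real.log (1 + F i) - F i)|
          ≤ ∑ i ∈ Finset.range N, |Real.log (1 + F i) - F i| := Finset.abs_sum_le_sum_abs _ _
        _ ≤ ∑ _i ∈ Finset.range N, 2 * (M * Δt n)^2 := Finset.sum_le_sum hlog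
        _ = (2 * M^2 * Δt n) * ((N : ℝ) * Δt n) := by
            rw [Finset.sum_const, Finset.card_range]; push_cast; ring
        _ ≤ (2 * M^2 * Δt n) * t := by
            refine mul_le_mul_of_nonneg_left (hNle n) ?_
            have := (hΔt n).le
            positivity
        _ = 2 * M^2 * t * Δt n := by ring
    -- sum of integrals vs the full integral
    have hsF : (∑ i ∈ Finset.range N, F i) = ∫ u in (0:ℝ)..((N : ℝ) * Δt n), a u := hsum n
    have hstep2 : |(∑ i ∈ Finset.range N, F i) - S| ≤ M * Δt n := by
      rw [hsF]
      have h1 : (0:ℝ) ≤ (N : ℝ) * Δt n := mul_nonneg (Nat.cast_nonneg N) (hΔt n).le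
      have h2 : (N : ℝ) * Δt n ≤ t := hNle n
      have hsplit : (∫ u in (0:ℝ)..((N : ℝ) * Δt n), a u)
          + (∫ u in ((N : ℝ) * Δt n)..t, a u) = S :=
        intervalIntegral.integral_add_adjacent_intervals
          (hint 0 _ le_rfl (h2.trans htT) h1) (hint _ t h1 htT h2)
      have h3 : (∫ u in (0:ℝ)..((N : ℝ) * Δt n), a u) - S
          = -(∫ u in ((N : ℝ) * Δt n)..t, a u) := by linarith [hsplit]
      rw [h3, abs_neg]
      have h4 := hbnd _ t h1 htT h2
      have h5 : t - (N : ℝ) * Δt n ≤ Δt n := by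
        have := htlt n
        linarith
      nlinarith
    calc |(∑ i ∈ Finset.range N, Real.log (1 + F i)) - S|
        ≤ |(∑ i ∈ Finset.range N, Real.log (1 + F i)) - ∑ i ∈ Finset.range N, F i|
          + |(∑ i ∈ Finset.range N, F i) - S| := abs_sub_le _ _ _
      _ ≤ 2 * M^2 * t * Δt n + M * Δt n := add_le_add hstep1 hstep2
      _ = (2 * M^2 * t + M) * Δt n := by ring
  -- transfer to the product via exp
  have hmain : Filter.Tendsto (fun n => Real.exp (-(∑ i ∈ Finset.range ⌊t / Δt n⌋₊,
      Real.log (1 + ∫ u in ((i : ℝ) * Δt n)..(((i : ℝ) + 1) * Δt n), a u))))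
      Filter.atTop (nhds (Real.exp (-S))) :=
    (Real.continuous_exp.tendsto _).comp hkey.neg
  apply hmain.congr'
  filter_upwards [hsmall] with n hn
  have hpos : ∀ i ∈ Finset.range ⌊t / Δt n⌋₊,
      0 < 1 + ∫ u in ((i : ℝ) * Δt n)..(((i : ℝ) + 1) * Δt n), a u := by
    intro i hi
    have h1 := abs_le.1 (hFb n i hi)
    linarith [h1.1]
  rw [Real.exp_neg, Real.exp_sum, ← Finset.prod_inv_distrib]
  exact Finset.prod_congr rfl fun i hi => by rw [Real.exp_log (hpos i hi)]
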